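/- For α ≥ 4, the supremum of v_α(x) = [α/((α−1)4^{α−1})]·(1/x)·[(1+x)^{α−1} − (1−3x)^{α−1}] over x ∈ (0, 1/3] is strictly smaller than the infimum of u_α(y) = [α/((α−1)3^{α−1})]·(1/y)·[(1+y)^{α−1} − (1−2y)^{α−1}] over y ∈ (0, 1/2]. -/

import Mathlib

open Real Set



-- basic exp facts
lemma myExpHalf : Real.exp (1/2) ≤ 2 := by
  nlinarith [Real.exp_pos (1/2 : ℝ), Real.exp_one_lt_d9,
    Real.exp_add (1/2 : ℝ) (1/2), Real.exp_pos (1:ℝ)]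

lemma myExpInv {u : ℝ} (hu : u < 1) : Real.exp u * (1 - u) ≤ 1 := by
  have h := Real.add_one_le_exp (-u)
  have h2 := Real.exp_pos u
  have h3 := mul_le_mul_of_nonneg_left h h2.le
  have h4 : Real.exp u * Real.exp (-u) = 1 := by
    rw [← Real.exp_add]; simp
  nlinarith

lemma myRpowLeExp {b s p : ℝ} (hb : 0 ≤ b) (h : b ≤ Real.exp s) (hp : 0 ≤ p) :
    b ^ p ≤ Real.exp (s * p) := by
  calc b ^ p ≤ (Real.exp s) ^ p := Real.rpow_le_rpow hb h hp
  _ = Real.exp (s * p) := (Real.exp_mul s p).symm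

-- (4/3)^g ≥ (4/9)(g+2) for g ≥ 2
lemma myFourThirds {g : ℝ} (hg : 2 ≤ g) : (4/9 : ℝ) * (g + 2) ≤ (4/3 : ℝ) ^ g := by
  have hlog : (1/4 : ℝ) ≤ Real.log (4/3) := by
    rw [Real.le_log_iff_exp_le (by norm_num)]
    have := myExpInv (u := (1/4 : ℝ)) (by norm_num)
    nlinarith [Real.exp_pos (1/4 : ℝ)]
  have key : ∀ t : ℝ, 0 ≤ t → 1 + t/4 ≤ (4/3 : ℝ) ^ t := by
    intro t ht
    rw [Real.rpow_def_of_pos (by norm_num)]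
    have h1 := Real.add_one_le_exp (Real.log (4/3) * t)
    nlinarith [Real.log_pos (show (1:ℝ) < 4/3 by norm_num)]
  have h2 : (4/3 : ℝ) ^ g = (4/3 : ℝ) ^ (2:ℝ) * (4/3 : ℝ) ^ (g - 2) := by
    rw [← Real.rpow_add (by norm_num)]; ring_nf
  have h3 : (4/3 : ℝ) ^ (2:ℝ) = 16/9 := by
    rw [show (2:ℝ) = ((2:ℕ):ℝ) by norm_num, Real.rpow_natCast]; norm_num
  have h4 := key (g - 2) (by linarith)
  rw [h2, h3]
  nlinarith

-- lemma G : b^(p-1)(b-a) ≤ b^p - a^p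
lemma myChordLower {a b p : ℝ} (ha : 0 ≤ a) (hab : a ≤ b) (hp : 1 ≤ p) :
    b ^ (p-1) * (b - a) ≤ b ^ p - a ^ p := by
  have hb : 0 ≤ b := le_trans ha hab
  rcases eq_or_lt_of_le hb with hb0 | hb0
  · have ha0 : a = 0 := le_antisymm (hb0 ▸ hab) ha
    rw [← hb0, ha0]
    simp
  · have hbp : b ^ p = b ^ (p-1) * b := by
      rw [← Real.rpow_add_one (ne_of_gt hb0)]; ring_nf
    have hap : a ^ p ≤ b ^ (p-1) * a := by
      rcases eq_or_lt_of_le ha with ha0 | ha0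
      · rw [← ha0, Real.zero_rpow (by linarith)]
        positivity
      · have : a ^ p = a ^ (p-1) * a := by
          rw [← Real.rpow_add_one (ne_of_gt ha0)]; ring_nf
        rw [this]
        have := Real.rpow_le_rpow ha hab (by linarith : (0:ℝ) ≤ p - 1)
        nlinarith
    nlinarith [hbp]



lemma myConvexAffineRpow (p a b lo hi : ℝ) (hp : 1 ≤ p)
    (h : ∀ t ∈ Set.Icc lo hi, 0 ≤ a + b * t) :
    ConvexOn ℝ (Set.Icc lo hi) (fun t => (a + b * t) ^ p) := by
  refine ⟨convex_Icc _ _, fun x hx y hy s t hs ht hst => ?_⟩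
  have hmem : s • x + t • y ∈ Set.Icc lo hi :=
    (convex_Icc lo hi) hx hy hs ht hst
  have key := (convexOn_rpow hp).2 (Set.mem_Ici.mpr (h x hx)) (Set.mem_Ici.mpr (h y hy)) hs ht hst
  simp only [smul_eq_mul] at key ⊢
  have e : a + b * (s * x + t * y) = s * (a + b * x) + t * (a + b * y) := by
    have : t = 1 - s := by linarith
    subst this; ring
  rw [e]
  exact key

-- Bernoulli-based: ψ' ≥ 0 ⇒ tangent lower bound for u
lemma myTanAux {p : ℝ} (hp : 3 ≤ p) {y : ℝ} (hy0 : 0 ≤ y) (hy : y ≤ 1/2) :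
    3*p*y - (3/2)*p*(p-1)*y^2 ≤ (1+y) ^ p - (1-2*y) ^ p := by
  set ψ : ℝ → ℝ := fun t => (1+t) ^ p - (1-2*t) ^ p - 3*p*t + (3/2)*p*(p-1)*t^2 with hψ
  have cont : ContinuousOn ψ (Set.Icc 0 (1/2)) := by
    apply ContinuousOn.add
    apply ContinuousOn.sub
    apply ContinuousOn.sub
    · exact ((continuous_const.add continuous_id).rpow_const
        (fun x => Or.inr (by linarith))).continuousOn
    · exact ((continuous_const.sub (continuous_const.mul continuous_id)).rpow_const
        (fun x => Or.inr (by linarith))).continuousOn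
    · exact (continuous_const.mul continuous_id).continuousOn
    · exact (continuous_const.mul (continuous_pow 2)).continuousOn
  have mono : MonotoneOn ψ (Set.Icc 0 (1/2)) := by
    apply monotoneOn_of_deriv_nonneg (convex_Icc _ _) cont
    · intro x hx
      rw [interior_Icc] at hx
      have h1 : HasDerivAt (fun t : ℝ => (1+t) ^ p) (1 * p * (1+x) ^ (p-1)) x :=
        ((hasDerivAt_id x).const_add 1).rpow_const (Or.inr (by linarith))
      have h2 : HasDerivAt (fun t : ℝ => (1-2*t) ^ p) ((-2) * p * (1-2*x) ^ (p-1)) x := by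
        have hin : HasDerivAt (fun t : ℝ => 1-2*t) (-2) x := by
          simpa using ((hasDerivAt_id x).const_mul (2:ℝ)).const_sub 1
        exact hin.rpow_const (Or.inr (by linarith))
      have h3 : HasDerivAt (fun t : ℝ => 3*p*t) (3*p) x := by
        simpa using (hasDerivAt_id x).const_mul (3*p)
      have h4 : HasDerivAt (fun t : ℝ => (3/2)*p*(p-1)*t^2) ((3/2)*p*(p-1)*(2*x)) x := by
        simpa using (hasDerivAt_pow 2 x).const_mul ((3/2)*p*(p-1))
      exact (((h1.sub h2).sub h3).add h4).differentiableAt.differentiableWithinAt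
    · intro x hx
      rw [interior_Icc] at hx
      obtain ⟨hx0, hx1⟩ := hx
      have h1 : HasDerivAt (fun t : ℝ => (1+t) ^ p) (1 * p * (1+x) ^ (p-1)) x :=
        ((hasDerivAt_id x).const_add 1).rpow_const (Or.inr (by linarith))
      have h2 : HasDerivAt (fun t : ℝ => (1-2*t) ^ p) ((-2) * p * (1-2*x) ^ (p-1)) x := by
        have hin : HasDerivAt (fun t : ℝ => 1-2*t) (-2) x := by
          simpa using ((hasDerivAt_id x).const_mul (2:ℝ)).const_sub 1
        exact hin.rpow_const (Or.inr (by linarith))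
      have h3 : HasDerivAt (fun t : ℝ => 3*p*t) (3*p) x := by
        simpa using (hasDerivAt_id x).const_mul (3*p)
      have h4 : HasDerivAt (fun t : ℝ => (3/2)*p*(p-1)*t^2) ((3/2)*p*(p-1)*(2*x)) x := by
        simpa using (hasDerivAt_pow 2 x).const_mul ((3/2)*p*(p-1))
      have hD : HasDerivAt ψ (1 * p * (1+x) ^ (p-1) - (-2) * p * (1-2*x) ^ (p-1) - 3*p
          + (3/2)*p*(p-1)*(2*x)) x := ((h1.sub h2).sub h3).add h4
      rw [hD.deriv]
      have B1 : 1 + (p-1) * x ≤ (1+x) ^ (p-1) :=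
        one_add_mul_self_le_rpow_one_add (by linarith) (by linarith)
      have B2 : 1 + (p-1) * (-(2*x)) ≤ (1-2*x) ^ (p-1) := by
        have h := one_add_mul_self_le_rpow_one_add (s := -(2*x)) (by linarith) (p := p-1) (by linarith)
        rw [show (1:ℝ) + -(2*x) = 1 - 2*x from by ring] at h
        exact h
      nlinarith
  have h0 : ψ 0 ≤ ψ y := mono (by constructor <;> norm_num) ⟨hy0, hy⟩ hy0
  have hψ0 : ψ 0 = 0 := by
    simp [hψ, Real.one_rpow]
  rw [hψ0] at h0
  simp only [hψ] at h0
  nlinarith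


-- endpoint estimate: (1+x₀)^q ≤ 2 and (1-3x₀)^q ≤ 2/5, x₀ = 1/(2q), q ≥ 2
lemma myEndpointA {q : ℝ} (hq : 2 ≤ q) : (1 + 1/(2*q)) ^ q ≤ 2 := by
  have hq0 : 0 < q := by linarith
  have h1 : (0:ℝ) ≤ 1 + 1/(2*q) := by positivity
  have h2 : 1 + 1/(2*q) ≤ Real.exp (1/(2*q)) := by
    have := Real.add_one_le_exp (1/(2*q)); linarith
  have h3 := myRpowLeExp h1 h2 hq0.le
  have e : 1/(2*q) * q = 1/2 := by field_simp
  rw [e] at h3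
  exact le_trans h3 myExpHalf

lemma myEndpointB {q : ℝ} (hq : 2 ≤ q) : (1 - 3/(2*q)) ^ q ≤ 2/5 := by
  have hq0 : 0 < q := by linarith
  have h1 : (0:ℝ) ≤ 1 - 3/(2*q) := by
    have : 3/(2*q) ≤ 3/4 := by
      apply div_le_div_of_nonneg_left (by norm_num) (by norm_num) (by linarith)
    linarith
  have h2 : 1 - 3/(2*q) ≤ Real.exp (-(3/(2*q))) := by
    have := Real.add_one_le_exp (-(3/(2*q))); linarith
  have h3 := myRpowLeExp h1 h2 hq0.le
  have e : -(3/(2*q)) * q = -(3/2) := by field_simp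
  rw [e] at h3
  refine le_trans h3 ?_
  have h4 := Real.add_one_le_exp (3/2 : ℝ)
  have h5 : Real.exp (-(3/2)) * Real.exp (3/2) = 1 := by
    rw [← Real.exp_add]; norm_num
  nlinarith [Real.exp_pos (-(3/2) : ℝ)]

-- V1 : (1+x)^p - (1-3x)^p ≤ 4px for 0 ≤ x ≤ 1/(2(p-1)), p ≥ 3
lemma myV1 {p : ℝ} (hp : 3 ≤ p) {x : ℝ} (hx0 : 0 ≤ x) (hx1 : x ≤ 1/(2*(p-1))) :
    (1+x) ^ p - (1-3*x) ^ p ≤ 4*p*x := by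
  set q : ℝ := p - 1 with hqdef
  have hq : 2 ≤ q := by simp [hqdef]; linarith
  set x₀ : ℝ := 1/(2*q) with hx₀def
  have hx₀pos : 0 < x₀ := by positivity
  have hx₀le : x₀ ≤ 1/4 := by
    rw [hx₀def]
    apply div_le_div_of_nonneg_left (by norm_num) (by norm_num) (by linarith)
  -- χ t = (1+t)^q + 3(1-3t)^q ≤ 4 on [0,x₀]
  have hχ : ∀ t ∈ Set.Icc 0 x₀, (1+t) ^ q + 3*(1-3*t) ^ q ≤ 4 := by
    have c1 : ConvexOn ℝ (Set.Icc 0 x₀) (fun t => (1 + 1 * t) ^ q) :=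
      myConvexAffineRpow q 1 1 0 x₀ (by linarith) (fun t ht => by
        obtain ⟨h1, h2⟩ := ht; nlinarith)
    have c2 : ConvexOn ℝ (Set.Icc 0 x₀) (fun t => (1 + (-3) * t) ^ q) :=
      myConvexAffineRpow q 1 (-3) 0 x₀ (by linarith) (fun t ht => by
        obtain ⟨h1, h2⟩ := ht
        have : t ≤ 1/4 := le_trans h2 hx₀le
        nlinarith)
    have c3 : ConvexOn ℝ (Set.Icc 0 x₀) (fun t => (1 + 1*t) ^ q + 3*(1 + (-3)*t) ^ q) :=
      c1.add (c2.smul (by norm_num))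
    intro t ht
    have hseg : t ∈ segment ℝ (0:ℝ) x₀ := by
      rw [segment_eq_Icc hx₀pos.le]; exact ht
    have hmax := c3.le_on_segment (Set.left_mem_Icc.mpr hx₀pos.le)
      (Set.right_mem_Icc.mpr hx₀pos.le) hseg
    have e0 : (1 + 1*(0:ℝ)) ^ q + 3*(1 + (-3)*(0:ℝ)) ^ q = 4 := by
      norm_num [Real.one_rpow]
    have e1 : (1 + 1*x₀) ^ q + 3*(1 + (-3)*x₀) ^ q ≤ 4 := by
      have a1 : (1 + 1*x₀) ^ q ≤ 2 := by
        rw [show 1 + 1*x₀ = 1 + 1/(2*q) from by rw [hx₀def]; ring]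
        exact myEndpointA hq
      have a2 : (1 + (-3)*x₀) ^ q ≤ 2/5 := by
        rw [show 1 + (-3)*x₀ = 1 - 3/(2*q) from by rw [hx₀def]; ring]
        exact myEndpointB hq
      linarith
    rw [e0] at hmax
    calc (1+t) ^ q + 3*(1-3*t) ^ q
        = (1 + 1*t) ^ q + 3*(1 + (-3)*t) ^ q := by
          rw [show (1:ℝ) + 1*t = 1+t from by ring, show (1:ℝ) + (-3)*t = 1-3*t from by ring]
      _ ≤ max 4 ((1 + 1*x₀) ^ q + 3*(1 + (-3)*x₀) ^ q) := hmax
      _ ≤ 4 := max_le (le_refl 4) e1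
  -- ψ t = 4pt - (1+t)^p + (1-3t)^p is monotone on [0,x₀]
  set ψ : ℝ → ℝ := fun t => 4*p*t - (1+t) ^ p + (1-3*t) ^ p with hψdef
  have cont : ContinuousOn ψ (Set.Icc 0 x₀) := by
    apply ContinuousOn.add
    apply ContinuousOn.sub
    · exact (continuous_const.mul continuous_id).continuousOn
    · exact ((continuous_const.add continuous_id).rpow_const
        (fun x => Or.inr (by linarith))).continuousOn
    · exact ((continuous_const.sub (continuous_const.mul continuous_id)).rpow_const
        (fun x => Or.inr (by linarith))).continuousOn
  have mono : MonotoneOn ψ (Set.Icc 0 x₀) := by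
    apply monotoneOn_of_deriv_nonneg (convex_Icc _ _) cont
    · intro t ht
      rw [interior_Icc] at ht
      have h1 : HasDerivAt (fun t : ℝ => (1+t) ^ p) (1 * p * (1+t) ^ (p-1)) t :=
        ((hasDerivAt_id t).const_add 1).rpow_const (Or.inr (by linarith))
      have h2 : HasDerivAt (fun t : ℝ => (1-3*t) ^ p) ((-3) * p * (1-3*t) ^ (p-1)) t := by
        have hin : HasDerivAt (fun t : ℝ => 1-3*t) (-3) t := by
          simpa using ((hasDerivAt_id t).const_mul (3:ℝ)).const_sub 1
        exact hin.rpow_const (Or.inr (by linarith))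
      have h3 : HasDerivAt (fun t : ℝ => 4*p*t) (4*p) t := by
        simpa using (hasDerivAt_id t).const_mul (4*p)
      exact ((h3.sub h1).add h2).differentiableAt.differentiableWithinAt
    · intro t ht
      rw [interior_Icc] at ht
      obtain ⟨ht0, ht1⟩ := ht
      have h1 : HasDerivAt (fun t : ℝ => (1+t) ^ p) (1 * p * (1+t) ^ (p-1)) t :=
        ((hasDerivAt_id t).const_add 1).rpow_const (Or.inr (by linarith))
      have h2 : HasDerivAt (fun t : ℝ => (1-3*t) ^ p) ((-3) * p * (1-3*t) ^ (p-1)) t := by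
        have hin : HasDerivAt (fun t : ℝ => 1-3*t) (-3) t := by
          simpa using ((hasDerivAt_id t).const_mul (3:ℝ)).const_sub 1
        exact hin.rpow_const (Or.inr (by linarith))
      have h3 : HasDerivAt (fun t : ℝ => 4*p*t) (4*p) t := by
        simpa using (hasDerivAt_id t).const_mul (4*p)
      have hD : HasDerivAt ψ (4*p - 1 * p * (1+t) ^ (p-1) + (-3) * p * (1-3*t) ^ (p-1)) t :=
        (h3.sub h1).add h2
      rw [hD.deriv]
      have hχt := hχ t ⟨ht0.le, ht1.le⟩
      rw [show p - 1 = q from by rw [hqdef]]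
      nlinarith
  have h0 : ψ 0 ≤ ψ x := mono (Set.left_mem_Icc.mpr hx₀pos.le) ⟨hx0, by
    rw [hx₀def, hqdef]; exact hx1⟩ hx0
  have hψ0 : ψ 0 = 0 := by simp [hψdef, Real.one_rpow]
  rw [hψ0] at h0
  simp only [hψdef] at h0
  linarith

-- E : (1 + 1/(2q))^(q+1) ≤ 2(q+1)/q  for q ≥ 2
lemma myE {q : ℝ} (hq : 2 ≤ q) : (1 + 1/(2*q)) ^ (q+1) ≤ 2*(q+1)/q := by
  have hq0 : 0 < q := by linarith
  have h1 : (0:ℝ) ≤ 1 + 1/(2*q) := by positivity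
  have h2 : 1 + 1/(2*q) ≤ Real.exp (1/(2*q)) := by
    have := Real.add_one_le_exp (1/(2*q)); linarith
  have h3 := myRpowLeExp h1 h2 (by linarith : (0:ℝ) ≤ q + 1)
  have e : 1/(2*q) * (q+1) = 1/2 + 1/(2*q) := by field_simp
  rw [e, Real.exp_add] at h3
  have h4 : Real.exp (1/(2*q)) * (1 - 1/(2*q)) ≤ 1 := myExpInv (by
    have : 1/(2*q) ≤ 1/4 := by
      apply div_le_div_of_nonneg_left (by norm_num) (by norm_num) (by linarith)
    linarith)
  have h5 : Real.exp (1/(2*q)) ≤ 2*q/(2*q-1) := by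
    rw [le_div_iff₀ (by linarith)]
    nlinarith [Real.exp_pos (1/(2*q))]
  have h6 : Real.exp (1/2) * Real.exp (1/(2*q)) ≤ 2 * (2*q/(2*q-1)) := by
    have := Real.exp_pos (1/(2*q))
    have := Real.exp_pos (1/2 : ℝ)
    nlinarith [myExpHalf]
  refine le_trans h3 (le_trans h6 ?_)
  rw [show 2*(2*q/(2*q-1)) = 4*q/(2*q-1) from by ring, div_le_div_iff₀ (by linarith) hq0]
  nlinarith

-- V2 : convexity endpoint bound for (1+x)^p ≤ c x on [x₀, 1/3]
lemma myV2 {p c x : ℝ} (hp : 3 ≤ p) (hc1 : (1 + 1/(2*(p-1))) ^ p ≤ c * (1/(2*(p-1))))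
    (hc2 : 3 * (4/3 : ℝ) ^ p ≤ c) (hx0 : 1/(2*(p-1)) ≤ x) (hx1 : x ≤ 1/3) :
    (1+x) ^ p ≤ c * x := by
  set x₀ : ℝ := 1/(2*(p-1)) with hx₀def
  have hp1 : (0:ℝ) < p - 1 := by linarith
  have hx₀pos : 0 < x₀ := by rw [hx₀def]; positivity
  have hconv : ConvexOn ℝ (Set.Icc x₀ (1/3)) (fun t => (1 + 1*t) ^ p + (-c)*t) := by
    have c1 : ConvexOn ℝ (Set.Icc x₀ (1/3)) (fun t => (1 + 1*t) ^ p) :=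
      myConvexAffineRpow p 1 1 x₀ (1/3) (by linarith) (fun t ht => by
        obtain ⟨h1, h2⟩ := ht; nlinarith)
    refine c1.add ⟨convex_Icc _ _, fun a ha b hb s t hs ht hst => le_of_eq ?_⟩
    simp only [smul_eq_mul]
    ring
  have hle : x₀ ≤ (1/3 : ℝ) := le_trans hx0 hx1
  have hseg : x ∈ segment ℝ x₀ (1/3 : ℝ) := by
    rw [segment_eq_Icc hle]
    exact ⟨hx0, hx1⟩
  have hmax := hconv.le_on_segment (Set.left_mem_Icc.mpr hle)
    (Set.right_mem_Icc.mpr hle) hseg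
  have e1 : (1 + 1*x₀) ^ p + (-c)*x₀ ≤ 0 := by
    rw [show (1:ℝ) + 1*x₀ = 1 + 1/(2*(p-1)) from by rw [hx₀def]; ring]
    rw [hx₀def]
    linarith
  have e2 : (1 + 1*(1/3 : ℝ)) ^ p + (-c)*(1/3) ≤ 0 := by
    rw [show (1:ℝ) + 1*(1/3) = 4/3 from by norm_num]
    linarith
  have : (1 + 1*x) ^ p + (-c)*x ≤ 0 :=
    le_trans hmax (max_le e1 e2)
  rw [show (1:ℝ) + 1*x = 1+x from by ring] at this
  linarith


noncomputable section

/-- The function u_α. -/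
def uFun (α : ℝ) (y : ℝ) : ℝ :=
  α / ((α - 1) * (3:ℝ) ^ (α - 1)) * (1/y) * ((1 + y) ^ (α - 1) - (1 - 2*y) ^ (α - 1))

/-- The function v_α. -/
def vFun (α : ℝ) (x : ℝ) : ℝ :=
  α / ((α - 1) * (4:ℝ) ^ (α - 1)) * (1/x) * ((1 + x) ^ (α - 1) - (1 - 3*x) ^ (α - 1))

set_option maxHeartbeats 2000000 in
/-- For α ≥ 4, the supremum of v_α on (0,1/3] is strictly smaller than the
    infimum of u_α on (0,1/2]. -/
theorem vFun_sup_lt_uFun_inf (α : ℝ) (hα : 4 ≤ α) :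
    sSup (vFun α '' Set.Ioc 0 (1/3)) < sInf (uFun α '' Set.Ioc 0 (1/2)) := by
  have hα0 : (0:ℝ) < α := by linarith
  have hβ : (3:ℝ) ≤ α - 1 := by linarith
  have hβ0 : (0:ℝ) < α - 1 := by linarith
  have hg : (2:ℝ) ≤ α - 2 := by linarith
  have hg0 : (0:ℝ) < α - 2 := by linarith
  set P : ℝ := (4:ℝ) ^ (α - 1) with hPdef
  set Q : ℝ := (3:ℝ) ^ (α - 1) with hQdef
  have hP0 : 0 < P := Real.rpow_pos_of_pos (by norm_num) _
  have hQ0 : 0 < Q := Real.rpow_pos_of_pos (by norm_num) _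
  set R : ℝ := (3:ℝ) ^ (2 - α) with hRdef
  set S4 : ℝ := (4:ℝ) ^ (2 - α) with hS4def
  have hR0 : 0 < R := Real.rpow_pos_of_pos (by norm_num) _
  have hS40 : 0 < S4 := Real.rpow_pos_of_pos (by norm_num) _
  have hRQ : R * Q = 3 := by
    rw [hRdef, hQdef, ← Real.rpow_add (by norm_num)]
    rw [show (2 - α) + (α - 1) = 1 by ring, Real.rpow_one]
  have hS4P : S4 * P = 4 := by
    rw [hS4def, hPdef, ← Real.rpow_add (by norm_num)]
    rw [show (2 - α) + (α - 1) = 1 by ring, Real.rpow_one]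
  set W : ℝ := (4/3 : ℝ) ^ (α - 2) with hWdef
  have hW0 : 0 < W := Real.rpow_pos_of_pos (by norm_num) _
  have hW49 : (4/9 : ℝ) * α ≤ W := by
    have := myFourThirds hg
    rw [show (α - 2) + 2 = α by ring] at this
    exact this
  -- S4 * W = R  (i.e. 4^{2-α} (4/3)^{α-2} = 3^{2-α})
  have hg3 : (0:ℝ) < (3:ℝ) ^ (α - 2) := Real.rpow_pos_of_pos (by norm_num) _
  have hSWR : S4 * W = R := by
    have e1 : W * (3:ℝ) ^ (α - 2) = (4:ℝ) ^ (α - 2) := by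
      rw [hWdef, ← Real.mul_rpow (by norm_num) (by norm_num)]
      norm_num
    have e2 : S4 * (4:ℝ) ^ (α - 2) = 1 := by
      rw [hS4def, ← Real.rpow_add (by norm_num)]
      rw [show (2 - α) + (α - 2) = 0 by ring, Real.rpow_zero]
    have e3 : R * (3:ℝ) ^ (α - 2) = 1 := by
      rw [hRdef, ← Real.rpow_add (by norm_num)]
      rw [show (2 - α) + (α - 2) = 0 by ring, Real.rpow_zero]
    have : S4 * W * (3:ℝ) ^ (α - 2) = R * (3:ℝ) ^ (α - 2) := by
      rw [mul_assoc, e1, e2, e3]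
    exact mul_right_cancel₀ (ne_of_gt hg3) this
  set y₀ : ℝ := 3 / (2*α - 1) with hy₀def
  have hy₀pos : 0 < y₀ := by
    rw [hy₀def]; exact div_pos (by norm_num) (by linarith)
  have hy₀half : y₀ ≤ 1/2 := by
    rw [hy₀def, div_le_div_iff₀ (by linarith) (by norm_num)]
    linarith
  -- Bernoulli for (1+y₀)^(α-2)
  have hBern : 1 + (α - 2) * y₀ ≤ (1 + y₀) ^ (α - 2) :=
    one_add_mul_self_le_rpow_one_add (by linarith) (by linarith)
  set K : ℝ := max S4 (R / (α - 1)) with hKdef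
  set A : ℝ := (α + 4) / (4*α - 2) with hAdef
  set B : ℝ := (1 + y₀) ^ (α - 2) / (α - 1) with hBdef
  set c₁ : ℝ := α * K with hc₁def
  set c₂ : ℝ := α * min (R * A) (R * B) with hc₂def
  -- Step 3 : c₁ < c₂
  have gap : c₁ < c₂ := by
    have e : 1 + (α - 2) * y₀ = (5*α - 7)/(2*α - 1) := by
      have hne : (2*α - 1) ≠ 0 := by linarith
      rw [hy₀def, eq_div_iff hne, add_mul, mul_assoc, div_mul_cancel₀ _ hne]; ring
    have hBernB : (5*α - 7)/(2*α - 1) ≤ (1 + y₀) ^ (α - 2) := e ▸ hBern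
    -- (i) S4 < R * A
    have hi : S4 < R * A := by
      have h1 : 4*α - 2 < W*(α+4) := by
        nlinarith [mul_le_mul_of_nonneg_right hW49 (show (0:ℝ) ≤ α + 4 by linarith)]
      have h2 : (1:ℝ) < W*(α+4)/(4*α-2) := by
        rw [lt_div_iff₀ (by linarith)]; linarith
      rw [← hSWR, hAdef, show S4 * W * ((α+4)/(4*α-2)) = S4 * (W*(α+4)/(4*α-2)) from by ring]
      nlinarith
    -- (ii) S4 < R * B
    have hii : S4 < R * B := by
      have h1 : (α - 1) * (2*α - 1) < W * (5*α - 7) := by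
        nlinarith [mul_le_mul_of_nonneg_right hW49 (show (0:ℝ) ≤ 5*α - 7 by linarith)]
      have h2 : α - 1 < W * ((1 + y₀) ^ (α - 2)) := by
        have h3 : W * ((5*α-7)/(2*α-1)) ≤ W * ((1 + y₀) ^ (α - 2)) :=
          mul_le_mul_of_nonneg_left hBernB hW0.le
        have h4 : α - 1 < W * ((5*α-7)/(2*α-1)) := by
          rw [show W * ((5*α-7)/(2*α-1)) = W * (5*α-7)/(2*α-1) from by ring,
            lt_div_iff₀ (by linarith)]
          linarith
        linarith
      have h5 : (1:ℝ) < W * ((1 + y₀) ^ (α - 2)) / (α - 1) := by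
        rw [lt_div_iff₀ hβ0]; linarith
      rw [← hSWR, hBdef, show S4 * W * ((1 + y₀) ^ (α - 2) / (α - 1))
          = S4 * (W * ((1 + y₀) ^ (α - 2)) / (α - 1)) from by ring]
      nlinarith
    -- (iii) R/(α-1) < R * A
    have hiii : R / (α - 1) < R * A := by
      have h1 : (1:ℝ)/(α-1) < A := by
        rw [hAdef, div_lt_div_iff₀ hβ0 (by linarith)]
        nlinarith
      rw [show R / (α-1) = R * (1/(α-1)) from by ring]
      exact mul_lt_mul_of_pos_left h1 hR0
    -- (iv) R/(α-1) < R * B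
    have hiv : R / (α - 1) < R * B := by
      have h1 : (1:ℝ) < (1 + y₀) ^ (α - 2) := by
        have : 1 + (α-2)*y₀ > 1 := by nlinarith
        linarith
      have h2 : (1:ℝ)/(α-1) < B := by
        rw [hBdef, div_lt_div_iff₀ hβ0 hβ0]
        nlinarith
      rw [show R / (α-1) = R * (1/(α-1)) from by ring]
      exact mul_lt_mul_of_pos_left h2 hR0
    rw [hc₁def, hc₂def]
    exact mul_lt_mul_of_pos_left (max_lt (lt_min hi hii) (lt_min hiii hiv)) hα0
  -- Step 1 : v ≤ c₁ on (0,1/3]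
  have vle : ∀ x ∈ Set.Ioc (0:ℝ) (1/3), vFun α x ≤ c₁ := by
    intro x hx
    obtain ⟨hx0, hx13⟩ := hx
    have hden : (0:ℝ) < (α-1) * P * x := by positivity
    have hvrep : vFun α x = α * ((1 + x) ^ (α - 1) - (1 - 3*x) ^ (α - 1)) / ((α-1) * P * x) := by
      rw [vFun, hPdef]
      field_simp
    set F : ℝ := (1 + x) ^ (α - 1) - (1 - 3*x) ^ (α - 1) with hFdef
    rcases le_or_gt x (1/(2*(α-2))) with hxle | hxgt
    · -- small x : F ≤ 4(α-1)x, v ≤ α S4 ≤ c₁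
      have hF : F ≤ 4*(α-1)*x := by
        have := myV1 (p := α - 1) hβ hx0.le (by
          rw [show (α:ℝ) - 1 - 1 = α - 2 from by ring]; exact hxle)
        rw [hFdef]; linarith
      have h1 : vFun α x ≤ α * S4 := by
        rw [hvrep, div_le_iff₀ hden]
        have e : α * S4 * ((α-1) * P * x) = α * (S4 * P) * (α - 1) * x := by ring
        rw [e, hS4P]
        nlinarith
      have h2 : α * S4 ≤ c₁ := by
        rw [hc₁def, hKdef]
        exact mul_le_mul_of_nonneg_left (le_max_left _ _) hα0.le
      linarith
    · -- large x : F ≤ (1+x)^{α-1} ≤ c x with c = P(α-1)K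
      have hKpos : 0 < K := lt_of_lt_of_le hS40 (le_max_left _ _)
      set c : ℝ := P * (α - 1) * K with hcdef
      have hc2 : 3 * (4/3 : ℝ) ^ (α - 1) ≤ c := by
        -- 3 (4/3)^{α-1} = P R  and  c ≥ P(α-1)(R/(α-1)) = P R
        have e1 : (4/3 : ℝ) ^ (α-1) * Q = P := by
          rw [hQdef, hPdef, ← Real.mul_rpow (by norm_num : (0:ℝ) ≤ 4/3) (by norm_num : (0:ℝ) ≤ 3),
            show (4/3 : ℝ) * 3 = 4 from by norm_num]
        have e2 : 3 * (4/3 : ℝ) ^ (α - 1) = P * R := by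
          linear_combination R * e1 - (4/3 : ℝ) ^ (α - 1) * hRQ
        have e3 : P * R ≤ c := by
          rw [hcdef]
          have : R / (α - 1) ≤ K := by rw [hKdef]; exact le_max_right _ _
          have h4 := mul_le_mul_of_nonneg_left this (mul_pos hP0 hβ0).le
          calc P * R = P * (α-1) * (R / (α-1)) := by field_simp
            _ ≤ P * (α-1) * K := h4
        linarith [e2 ▸ e3]
      have hc1 : (1 + 1/(2*(α-1-1))) ^ (α-1) ≤ c * (1/(2*(α-1-1))) := by
        have e0 : (α:ℝ) - 1 - 1 = α - 2 := by ring
        rw [e0]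
        have hE := myE (q := α - 2) hg
        rw [show (α:ℝ) - 2 + 1 = α - 1 from by ring] at hE
        -- c * x₀ ≥ 4(α-1) x₀ = 2(α-1)/(α-2)
        have h4 : 4*(α-1) ≤ c := by
          have : S4 ≤ K := by rw [hKdef]; exact le_max_left _ _
          have h5 := mul_le_mul_of_nonneg_left this (mul_pos hP0 hβ0).le
          have e : P * (α-1) * S4 = (S4 * P) * (α - 1) := by ring
          rw [hcdef]
          nlinarith [hS4P]
        have h6 : 2*(α-1)/(α-2) ≤ c * (1/(2*(α-2))) := by
          rw [div_le_iff₀ hg0, show c * (1/(2*(α-2))) * (α-2) = c/2 from by field_simp]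
          linarith
        linarith
      have hV2 := myV2 (p := α - 1) (c := c) hβ hc1 hc2 (by
        rw [show (α:ℝ) - 1 - 1 = α - 2 from by ring]; linarith) hx13
      have hF : F ≤ c * x := by
        have hnn : 0 ≤ (1 - 3*x) ^ (α - 1) := Real.rpow_nonneg (by linarith) _
        rw [hFdef]; linarith
      have h1 : vFun α x ≤ α * K := by
        rw [hvrep, div_le_iff₀ hden]
        have e : α * K * ((α-1) * P * x) = α * (c * x) := by rw [hcdef]; ring
        rw [e]
        exact mul_le_mul_of_nonneg_left hF hα0.le
      rw [hc₁def]
      exact h1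
  -- Step 2 : u ≥ c₂ on (0,1/2]
  have ule : ∀ y ∈ Set.Ioc (0:ℝ) (1/2), c₂ ≤ uFun α y := by
    intro y hy
    obtain ⟨hy0, hy12⟩ := hy
    have hden : (0:ℝ) < (α-1) * Q * y := by positivity
    have hurep : uFun α y = α * ((1 + y) ^ (α - 1) - (1 - 2*y) ^ (α - 1)) / ((α-1) * Q * y) := by
      rw [uFun, hQdef]
      field_simp
    set F : ℝ := (1 + y) ^ (α - 1) - (1 - 2*y) ^ (α - 1) with hFdef
    rcases le_or_gt y y₀ with hyle | hygt
    · -- small y : tangent bound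
      have hTan := myTanAux (p := α - 1) hβ hy0.le hy12
      rw [show (α:ℝ) - 1 - 1 = α - 2 from by ring] at hTan
      have hF : 3*(α-1)*y - (3/2)*(α-1)*(α-2)*y^2 ≤ F := by rw [hFdef]; linarith
      -- 1 - (α-2) y/2 ≥ A
      have hAy : A ≤ 1 - (α-2)*y/2 := by
        have h1 : y * (2*α - 1) ≤ 3 := by
          rw [hy₀def] at hyle
          rw [← le_div_iff₀ (by linarith : (0:ℝ) < 2*α-1)]
          exact hyle
        rw [hAdef, div_le_iff₀ (by linarith : (0:ℝ) < 4*α-2)]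
        nlinarith
      have hc₂A : c₂ ≤ α * (R * A) := by
        rw [hc₂def]
        exact mul_le_mul_of_nonneg_left (min_le_left _ _) hα0.le
      refine le_trans hc₂A ?_
      rw [hurep, le_div_iff₀ hden]
      -- α R A (α-1) Q y ≤ α F, with R Q = 3
      have e : α * (R * A) * ((α-1) * Q * y) = α * (R * Q) * A * (α-1) * y := by ring
      rw [e, hRQ]
      -- goal : α * 3 * A * (α-1) * y ≤ α * F
      have h2 : 3 * A * (α - 1) * y ≤ 3*(α-1)*y - (3/2)*(α-1)*(α-2)*y^2 := by
        have h3 : 3 * (α-1) * y * A ≤ 3 * (α-1) * y * (1 - (α-2)*y/2) :=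
          mul_le_mul_of_nonneg_left hAy (by positivity)
        nlinarith
      nlinarith
    · -- large y : chord bound
      have hCh := myChordLower (a := 1 - 2*y) (b := 1 + y) (p := α - 1)
        (by linarith) (by linarith) (by linarith)
      rw [show (α:ℝ) - 1 - 1 = α - 2 from by ring,
        show (1 + y) - (1 - 2*y) = 3*y from by ring] at hCh
      have hF : (1+y)^(α-2) * (3*y) ≤ F := by rw [hFdef]; linarith
      have hmono : (1 + y₀) ^ (α - 2) ≤ (1 + y) ^ (α - 2) :=
        Real.rpow_le_rpow (by linarith) (by linarith) hg0.le
      have hc₂B : c₂ ≤ α * (R * B) := by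
        rw [hc₂def]
        exact mul_le_mul_of_nonneg_left (min_le_right _ _) hα0.le
      refine le_trans hc₂B ?_
      rw [hurep, le_div_iff₀ hden]
      have e : α * (R * B) * ((α-1) * Q * y) = α * (R * Q) * ((1 + y₀) ^ (α - 2)) * y := by
        rw [hBdef]; field_simp
      rw [e, hRQ]
      -- goal : α * 3 * (1+y₀)^{α-2} * y ≤ α * F
      have hy₀rpow : 0 ≤ (1 + y₀) ^ (α - 2) := Real.rpow_nonneg (by linarith) _
      nlinarith [mul_le_mul_of_nonneg_right hmono (show (0:ℝ) ≤ 3*α*y by positivity),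
        mul_le_mul_of_nonneg_left hF hα0.le]
  -- Step 4 : assemble
  have hne_v : (vFun α '' Set.Ioc 0 (1/3)).Nonempty :=
    ⟨vFun α (1/3), Set.mem_image_of_mem _ (by constructor <;> norm_num)⟩
  have hne_u : (uFun α '' Set.Ioc 0 (1/2)).Nonempty :=
    ⟨uFun α (1/2), Set.mem_image_of_mem _ (by constructor <;> norm_num)⟩
  have h1 : sSup (vFun α '' Set.Ioc 0 (1/3)) ≤ c₁ := by
    apply csSup_le hne_v
    rintro z ⟨x, hx, rfl⟩
    exact vle x hx
  have h2 : c₂ ≤ sInf (uFun α '' Set.Ioc 0 (1/2)) := by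
    apply le_csInf hne_u
    rintro z ⟨y, hy, rfl⟩
    exact ule y hy
  linarith
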